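/- Suppose φ has finite right derivative φ'(0⁺) ∈ [0,∞) at 0. Then for every ς ∈ (0,∞), lim_{t→∞} h_ς(t)/t = (φ'(0⁺))^{1/2}·ς. -/

import Mathlib

open Set Filter Topology

/-- `hS φ ς t = inf_{τ>0} { φ(1/τ)·t² + (ς²/4)·τ }`. -/
noncomputable def hS (φ : ℝ → ℝ) (ς t : ℝ) : ℝ :=
  sInf {y : ℝ | ∃ τ : ℝ, 0 < τ ∧ y = φ (1/τ) * t^2 + ς^2/4 * τ}

lemma hS_set_nonempty (φ : ℝ → ℝ) (ς t : ℝ) :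
    {y : ℝ | ∃ τ : ℝ, 0 < τ ∧ y = φ (1/τ) * t^2 + ς^2/4 * τ}.Nonempty :=
  ⟨φ (1/1) * t^2 + ς^2/4 * 1, 1, one_pos, rfl⟩

lemma hS_set_bddBelow (φ : ℝ → ℝ) (hnonneg : ∀ t ≥ (0:ℝ), 0 ≤ φ t) (ς t : ℝ) (hς : 0 ≤ ς) :
    BddBelow {y : ℝ | ∃ τ : ℝ, 0 < τ ∧ y = φ (1/τ) * t^2 + ς^2/4 * τ} := by
  refine ⟨0, fun y hy => ?_⟩
  obtain ⟨τ, hτ, rfl⟩ := hy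
  have h1 : 0 ≤ φ (1/τ) := hnonneg _ (by positivity)
  have : 0 ≤ ς^2/4 * τ := by positivity
  nlinarith [sq_nonneg t]

lemma hS_le (φ : ℝ → ℝ) (hnonneg : ∀ t ≥ (0:ℝ), 0 ≤ φ t) (ς t τ : ℝ) (hς : 0 ≤ ς)
    (hτ : 0 < τ) : hS φ ς t ≤ φ (1/τ) * t^2 + ς^2/4 * τ :=
  csInf_le (hS_set_bddBelow φ hnonneg ς t hς) ⟨τ, hτ, rfl⟩

lemma hS_ge (φ : ℝ → ℝ) (ς t B : ℝ)
    (h : ∀ τ : ℝ, 0 < τ → B ≤ φ (1/τ) * t^2 + ς^2/4 * τ) : B ≤ hS φ ς t := by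
  refine le_csInf (hS_set_nonempty φ ς t) ?_
  rintro y ⟨τ, hτ, rfl⟩
  exact h τ hτ

lemma amgm (a b : ℝ) (ha : 0 ≤ a) (hb : 0 ≤ b) : 2 * Real.sqrt (a * b) ≤ a + b := by
  nlinarith [Real.sq_sqrt ha, Real.sq_sqrt hb, Real.sqrt_nonneg a, Real.sqrt_nonneg b,
    sq_nonneg (Real.sqrt a - Real.sqrt b), Real.sqrt_mul ha b]

set_option maxHeartbeats 1000000 in
theorem stmt4 (φ : ℝ → ℝ)
    (hcont : ContinuousOn φ (Ici 0)) (hmono : MonotoneOn φ (Ici 0))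
    (hnonneg : ∀ t ≥ (0:ℝ), 0 ≤ φ t) (hφ0 : φ 0 = 0) (hpos : ∀ t > (0:ℝ), 0 < φ t)
    (c : ℝ) (hc : 0 ≤ c)
    (hderiv : Tendsto (fun s => φ s / s) (𝓝[>] (0:ℝ)) (𝓝 c))
    (hbdd : ∃ M : ℝ, ∀ t ≥ (0:ℝ), φ t ≤ M)
    (ς : ℝ) (hς : 0 < ς) :
    Tendsto (fun t => hS φ ς t / t) atTop (𝓝 (Real.sqrt c * ς)) := by
  obtain ⟨L, hL, hLnn⟩ : ∃ L : ℝ, L = Real.sqrt c * ς ∧ 0 ≤ L :=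
    ⟨_, rfl, mul_nonneg (Real.sqrt_nonneg c) hς.le⟩
  rw [Metric.tendsto_atTop, ← hL]
  intro ε hε
  -- Upper bound
  have upper : ∃ N : ℝ, 0 < N ∧ ∀ t ≥ N, hS φ ς t / t ≤ L + ε/2 := by
    -- choose u, δ with (c+δ)/u + ς^2/4*u ≤ L + ε/2
    obtain ⟨u, hu, δ, hδ, hsum⟩ :
        ∃ u : ℝ, 0 < u ∧ ∃ δ : ℝ, 0 < δ ∧ (c+δ)/u + ς^2/4*u ≤ L + ε/2 := by
      rcases eq_or_lt_of_le hc with h0 | h0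
      · refine ⟨ε/ς^2, by positivity, ε * (ε/ς^2) / 4, by positivity, ?_⟩
        rw [← h0]
        have h1 : (0 + ε * (ε/ς^2) / 4) / (ε/ς^2) = ε/4 := by
          field_simp
          ring
        rw [h1]
        have : ς^2/4 * (ε/ς^2) = ε/4 := by field_simp
        rw [this]
        linarith
      · refine ⟨2 * Real.sqrt c / ς, by positivity, ε * (2 * Real.sqrt c / ς) / 2,
          by positivity, ?_⟩
        have hsc : Real.sqrt c > 0 := Real.sqrt_pos.mpr h0
        have hsq : Real.sqrt c * Real.sqrt c = c := Real.mul_self_sqrt hc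
        have key : c / (2 * Real.sqrt c / ς) + ς^2/4 * (2 * Real.sqrt c / ς) = L := by
          rw [hL]
          field_simp
          nlinarith [hsq]
        have h2 : (ε * (2 * Real.sqrt c / ς) / 2) / (2 * Real.sqrt c / ς) = ε/2 := by
          field_simp
        have : (c + ε * (2 * Real.sqrt c / ς) / 2) / (2 * Real.sqrt c / ς)
            = c / (2 * Real.sqrt c / ς) + ε/2 := by
          rw [add_div, h2]

        rw [this]
        linarith
    -- from hderiv, get s₀
    obtain ⟨s₀, hs₀, H⟩ := Metric.tendsto_nhdsWithin_nhds.mp hderiv δ hδ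
    refine ⟨max 1 (2 / (u * s₀)), lt_max_of_lt_left one_pos, fun t ht => ?_⟩
    have ht1 : (1:ℝ) ≤ t := le_trans (le_max_left _ _) ht
    have htpos : 0 < t := lt_of_lt_of_le one_pos ht1
    have ht2 : 2 / (u * s₀) ≤ t := le_trans (le_max_right _ _) ht
    set s := 1 / (u * t) with hs
    have hspos : 0 < s := by positivity
    have hss : s < s₀ := by
      rw [hs, div_lt_iff₀ (by positivity)]
      have : 2 ≤ t * (u * s₀) := by
        rw [div_le_iff₀ (by positivity)] at ht2
        linarith
      nlinarith
    have hdist : dist (φ s / s) c < δ := by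
      refine H (mem_Ioi.mpr hspos) ?_
      rw [Real.dist_eq, sub_zero, abs_of_pos hspos]
      exact hss
    have hφs : φ s ≤ (c + δ) * s := by
      rw [Real.dist_eq, abs_lt] at hdist
      have := hdist.2
      rw [div_sub' (ne_of_gt hspos), div_lt_iff₀ hspos] at this
      nlinarith
    have hle : hS φ ς t ≤ φ (1/(u*t)) * t^2 + ς^2/4 * (u*t) :=
      hS_le φ hnonneg ς t (u*t) hς.le (by positivity)
    have hbound : φ (1/(u*t)) * t^2 + ς^2/4 * (u*t) ≤ (L + ε/2) * t := by
      have h3 : φ (1/(u*t)) * t^2 ≤ (c+δ)/u * t := by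
        have : φ s ≤ (c+δ) * s := hφs
        rw [hs] at this
        have hut : 0 < u * t := by positivity
        calc φ (1/(u*t)) * t^2 ≤ ((c+δ) * (1/(u*t))) * t^2 := by nlinarith [sq_nonneg t]
          _ = (c+δ)/u * t := by field_simp
      have h4 : ς^2/4 * (u*t) = (ς^2/4*u) * t := by ring
      calc φ (1/(u*t)) * t^2 + ς^2/4 * (u*t) ≤ (c+δ)/u * t + (ς^2/4*u) * t := by
            rw [h4]; linarith
        _ = ((c+δ)/u + ς^2/4*u) * t := by ring
        _ ≤ (L + ε/2) * t := by nlinarith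
    rw [div_le_iff₀ htpos]
    linarith
  -- Lower bound
  have lower : ∃ N : ℝ, 0 < N ∧ ∀ t ≥ N, L - ε/2 ≤ hS φ ς t / t := by
    rcases eq_or_lt_of_le hc with h0 | h0
    · -- c = 0: L = 0, hS ≥ 0
      refine ⟨1, one_pos, fun t ht => ?_⟩
      have htpos : 0 < t := lt_of_lt_of_le one_pos ht
      have h1 : (0:ℝ) ≤ hS φ ς t := by
        refine hS_ge φ ς t 0 (fun τ hτ => ?_)
        have := hnonneg (1/τ) (by positivity)
        nlinarith [sq_nonneg t]
      have hL0 : L = 0 := by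
        rw [hL, ← h0, Real.sqrt_zero, zero_mul]
      rw [hL0]
      have : 0 ≤ hS φ ς t / t := div_nonneg h1 htpos.le
      linarith
    · -- c > 0
      obtain ⟨δ, hδ, hδc, hsqδ⟩ : ∃ δ : ℝ, 0 < δ ∧ δ < c ∧ ς * Real.sqrt δ ≤ ε/2 := by
        refine ⟨min (c/2) ((ε/(2*ς))^2), lt_min (by linarith) (by positivity),
          lt_of_le_of_lt (min_le_left _ _) (by linarith), ?_⟩
        have h1 : Real.sqrt (min (c/2) ((ε/(2*ς))^2)) ≤ ε/(2*ς) := by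
          calc Real.sqrt (min (c/2) ((ε/(2*ς))^2)) ≤ Real.sqrt ((ε/(2*ς))^2) :=
                Real.sqrt_le_sqrt (min_le_right _ _)
            _ = ε/(2*ς) := Real.sqrt_sq (by positivity)
        calc ς * Real.sqrt (min (c/2) ((ε/(2*ς))^2)) ≤ ς * (ε/(2*ς)) := by nlinarith
          _ = ε/2 := by field_simp
      have hkey : L - ε/2 ≤ ς * Real.sqrt (c - δ) := by
        have hsub : Real.sqrt c ≤ Real.sqrt (c-δ) + Real.sqrt δ := by
          have h1 : c ≤ (Real.sqrt (c-δ) + Real.sqrt δ)^2 := by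
            nlinarith [Real.sq_sqrt (show (0:ℝ) ≤ c - δ by linarith), Real.sq_sqrt hδ.le,
              Real.sqrt_nonneg (c-δ), Real.sqrt_nonneg δ]
          calc Real.sqrt c ≤ Real.sqrt ((Real.sqrt (c-δ) + Real.sqrt δ)^2) :=
                Real.sqrt_le_sqrt h1
            _ = Real.sqrt (c-δ) + Real.sqrt δ := Real.sqrt_sq (by positivity)
        have : L ≤ ς * Real.sqrt (c-δ) + ς * Real.sqrt δ := by
          rw [hL]
          nlinarith
        linarith
      obtain ⟨s₀, hs₀, H⟩ := Metric.tendsto_nhdsWithin_nhds.mp hderiv δ hδ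
      have hφlb : ∀ s : ℝ, 0 < s → s < s₀ → (c - δ) * s ≤ φ s := by
        intro s hsp hss
        have hdist : dist (φ s / s) c < δ := H (mem_Ioi.mpr hsp)
          (by rw [Real.dist_eq, sub_zero, abs_of_pos hsp]; exact hss)
        rw [Real.dist_eq, abs_lt] at hdist
        have h2 : c - δ < φ s / s := by linarith [hdist.1]
        rw [lt_div_iff₀ hsp] at h2
        linarith
      have hφτ₀ : 0 < φ (s₀/2) := hpos _ (by linarith)
      refine ⟨max 1 (L / φ (s₀/2)), lt_max_of_lt_left one_pos, fun t ht => ?_⟩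
      have ht1 : (1:ℝ) ≤ t := le_trans (le_max_left _ _) ht
      have htpos : 0 < t := lt_of_lt_of_le one_pos ht1
      have ht2 : L / φ (s₀/2) ≤ t := le_trans (le_max_right _ _) ht
      have hB : (L - ε/2) * t ≤ hS φ ς t := by
        refine hS_ge φ ς t _ (fun τ hτ => ?_)
        rcases le_or_gt (2/s₀) τ with hτ₀ | hτ₀
        · -- large τ : AM-GM
          have h1τ : 0 < 1/τ := by positivity
          have h1τs : 1/τ < s₀ := by
            rw [div_lt_iff₀ hτ]
            have : 2 / s₀ ≤ τ := hτ₀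
            rw [div_le_iff₀ hs₀] at this
            nlinarith
          have hφ1 : (c - δ) * (1/τ) ≤ φ (1/τ) := hφlb _ h1τ h1τs
          have ha : (0:ℝ) ≤ (c-δ) * (1/τ) * t^2 :=
            mul_nonneg (mul_nonneg (by linarith) h1τ.le) (sq_nonneg t)
          have hb : (0:ℝ) ≤ ς^2/4 * τ := by positivity
          have hgm : 2 * Real.sqrt (((c-δ) * (1/τ) * t^2) * (ς^2/4 * τ)) ≤
              (c-δ) * (1/τ) * t^2 + ς^2/4 * τ := amgm _ _ ha hb
          have hprod : ((c-δ) * (1/τ) * t^2) * (ς^2/4 * τ)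
              = (Real.sqrt (c-δ) * t * (ς/2))^2 := by
            have h2 : Real.sqrt (c-δ) ^ 2 = c - δ := Real.sq_sqrt (by linarith)
            field_simp
            linear_combination (-4) * h2
          have hsqrt : Real.sqrt (((c-δ) * (1/τ) * t^2) * (ς^2/4 * τ))
              = Real.sqrt (c-δ) * t * (ς/2) := by
            rw [hprod, Real.sqrt_sq (by positivity)]
          have h5 : ς * Real.sqrt (c-δ) * t ≤ (c-δ) * (1/τ) * t^2 + ς^2/4 * τ := by
            rw [hsqrt] at hgm
            nlinarith
          have h6 : (c-δ) * (1/τ) * t^2 ≤ φ (1/τ) * t^2 := by nlinarith [sq_nonneg t]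
          have h7 : (L - ε/2) * t ≤ ς * Real.sqrt (c-δ) * t := by nlinarith
          linarith
        · -- small τ : monotonicity
          have h1τ : s₀/2 < 1/τ := by
            rw [lt_div_iff₀ hτ]
            rw [lt_div_iff₀ hs₀] at hτ₀
            nlinarith
          have hmon : φ (s₀/2) ≤ φ (1/τ) :=
            hmono (mem_Ici.mpr (by linarith)) (mem_Ici.mpr (by positivity)) h1τ.le
          have h8 : L * t ≤ φ (s₀/2) * t^2 := by
            rw [div_le_iff₀ hφτ₀] at ht2
            nlinarith
          have h9 : φ (s₀/2) * t^2 ≤ φ (1/τ) * t^2 := by nlinarith [sq_nonneg t]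
          have hb : (0:ℝ) ≤ ς^2/4 * τ := by positivity
          nlinarith
      rw [le_div_iff₀ htpos]
      linarith
  obtain ⟨N₁, hN₁, hup⟩ := upper
  obtain ⟨N₂, hN₂, hlo⟩ := lower
  refine ⟨max N₁ N₂, fun t ht => ?_⟩
  have h1 := hup t (le_trans (le_max_left _ _) ht)
  have h2 := hlo t (le_trans (le_max_right _ _) ht)
  rw [Real.dist_eq, abs_lt]
  constructor <;> linarith
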